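/- (Weak Jarník theorem) Let I be a compact real interval, let f : I → ℝ be twice continuously differentiable and strictly convex, and let Γ = {(x, f(x)) : x ∈ I} be its graph. Then there exists a constant c > 0, depending only on I and f, such that for every positive integer N, |Γ ∩ Λ_N| ≤ c·N^{2/3}. -/

import Mathlib

open Set

/-- Core counting lemma for the Jarník argument. -/
lemma jarnik_core (m : ℕ) (d g : ℕ → ℝ) (T D S : ℝ)
    (hT : 1 ≤ T)
    (hd : ∀ i < m, 1 ≤ d i)
    (hg : ∀ i, i + 1 < m → 1 / (d i * d (i + 1)) ≤ g i)
    (hgsum : ∑ i ∈ Finset.range (m - 1), g i ≤ D)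
    (hdsum : ∑ i ∈ Finset.range m, d i ≤ S) :
    (m : ℝ) ≤ 1 + D * T + 2 * S / Real.sqrt T := by
  classical
  have hT0 : (0:ℝ) < T := lt_of_lt_of_le one_pos hT
  have hrT : (0:ℝ) < Real.sqrt T := Real.sqrt_pos.2 hT0
  set A : Finset ℕ := (Finset.range (m-1)).filter (fun i => d i * d (i+1) ≤ T) with hA
  set B : Finset ℕ := (Finset.range (m-1)).filter (fun i => ¬ d i * d (i+1) ≤ T) with hB
  set C : Finset ℕ := (Finset.range m).filter (fun j => Real.sqrt T < d j) with hC
  have hgpos : ∀ i ∈ Finset.range (m-1), 0 ≤ g i := by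
    intro i hi
    have hi' : i + 1 < m := by
      have := Finset.mem_range.1 hi; omega
    refine le_trans ?_ (hg i hi')
    have h1 : (1:ℝ) ≤ d i := hd i (by omega)
    have h2 : (1:ℝ) ≤ d (i+1) := hd (i+1) hi'
    positivity
  -- bound on card A
  have hAcard : (A.card : ℝ) ≤ D * T := by
    have h1 : (A.card : ℝ) * (1/T) ≤ ∑ i ∈ A, g i := by
      have := Finset.card_nsmul_le_sum A g (1/T) ?_
      · rwa [nsmul_eq_mul] at this
      intro i hi
      rw [hA, Finset.mem_filter, Finset.mem_range] at hi
      obtain ⟨hi1, hi2⟩ := hi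
      have hi' : i + 1 < m := by omega
      refine le_trans ?_ (hg i hi')
      have h1 : (1:ℝ) ≤ d i := hd i (by omega)
      have h2 : (1:ℝ) ≤ d (i+1) := hd (i+1) hi'
      have hdd : (0:ℝ) < d i * d (i+1) := by positivity
      exact one_div_le_one_div_of_le hdd hi2
    have h2 : ∑ i ∈ A, g i ≤ D := by
      refine le_trans (Finset.sum_le_sum_of_subset_of_nonneg (Finset.filter_subset _ _) ?_) hgsum
      intro i hi _; exact hgpos i hi
    have := le_trans h1 h2
    rw [mul_one_div, div_le_iff₀ hT0] at this
    linarith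
  -- bound on card C
  have hCcard : (C.card : ℝ) ≤ S / Real.sqrt T := by
    have h1 : (C.card : ℝ) * Real.sqrt T ≤ ∑ j ∈ C, d j := by
      have := Finset.card_nsmul_le_sum C d (Real.sqrt T) ?_
      · rwa [nsmul_eq_mul] at this
      intro j hj
      rw [hC, Finset.mem_filter] at hj
      exact le_of_lt hj.2
    have h2 : ∑ j ∈ C, d j ≤ S := by
      refine le_trans (Finset.sum_le_sum_of_subset_of_nonneg (Finset.filter_subset _ _) ?_) hdsum
      intro j hj _
      exact le_trans zero_le_one (hd j (Finset.mem_range.1 hj))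
    rw [le_div_iff₀ hrT]
    exact le_trans h1 h2
  -- bound on card B
  have hBsub : B ⊆ ((Finset.range (m-1)).filter (fun i => Real.sqrt T < d i)) ∪
      ((Finset.range (m-1)).filter (fun i => Real.sqrt T < d (i+1))) := by
    intro i hi
    rw [hB, Finset.mem_filter, Finset.mem_range] at hi
    obtain ⟨hi1, hi2⟩ := hi
    push_neg at hi2
    by_contra hcon
    rw [Finset.mem_union, Finset.mem_filter, Finset.mem_filter, Finset.mem_range] at hcon
    push_neg at hcon
    have c1 : d i ≤ Real.sqrt T := (hcon.1 hi1)
    have c2 : d (i+1) ≤ Real.sqrt T := (hcon.2 hi1)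
    have h1 : (1:ℝ) ≤ d i := hd i (by omega)
    have h2 : (1:ℝ) ≤ d (i+1) := hd (i+1) (by omega)
    have : d i * d (i+1) ≤ Real.sqrt T * Real.sqrt T :=
      mul_le_mul c1 c2 (by linarith) (le_of_lt hrT)
    rw [Real.mul_self_sqrt (le_of_lt hT0)] at this
    linarith
  have hB1 : ((Finset.range (m-1)).filter (fun i => Real.sqrt T < d i)).card ≤ C.card := by
    apply Finset.card_le_card
    intro i hi
    rw [Finset.mem_filter, Finset.mem_range] at hi
    rw [hC, Finset.mem_filter, Finset.mem_range]
    exact ⟨by omega, hi.2⟩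
  have hB2 : ((Finset.range (m-1)).filter (fun i => Real.sqrt T < d (i+1))).card ≤ C.card := by
    apply Finset.card_le_card_of_injOn (fun i => i + 1)
    · intro i hi
      rw [Finset.mem_coe, Finset.mem_filter, Finset.mem_range] at hi
      rw [hC, Finset.mem_coe, Finset.mem_filter, Finset.mem_range]
      exact ⟨by simp only; omega, hi.2⟩
    · intro x _ y _ h; simpa using h
  have hBcard : (B.card : ℝ) ≤ 2 * S / Real.sqrt T := by
    have := Finset.card_le_card hBsub
    have h2 := Finset.card_union_le
      ((Finset.range (m-1)).filter (fun i => Real.sqrt T < d i))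
      ((Finset.range (m-1)).filter (fun i => Real.sqrt T < d (i+1)))
    have hn : B.card ≤ C.card + C.card := by omega
    have : (B.card : ℝ) ≤ (C.card : ℝ) + (C.card : ℝ) := by exact_mod_cast hn
    rw [mul_div_assoc]
    linarith
  have hsplit : A.card + B.card = m - 1 := by
    rw [hA, hB, Finset.card_filter_add_card_filter_not, Finset.card_range]
  have hm1 : (m:ℝ) ≤ (A.card : ℝ) + (B.card : ℝ) + 1 := by
    have : m ≤ A.card + B.card + 1 := by omega
    exact_mod_cast this
  linarith

/-- The main counting bound for lattice points on a strictly convex graph. -/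
lemma jarnik_card_bound (a b K : ℝ) (f : ℝ → ℝ) (hab : a < b) (hK0 : 0 ≤ K)
    (hconv : StrictConvexOn ℝ (Icc a b) f)
    (hlip : ∀ x ∈ Icc a b, ∀ y ∈ Icc a b, |f y - f x| ≤ K * |y - x|)
    (N : ℕ) (hN : 0 < N) (F : Finset ℤ)
    (hmem : ∀ s ∈ F, a ≤ (s:ℝ)/N ∧ (s:ℝ)/N ≤ b ∧ ∃ t : ℤ, f ((s:ℝ)/N) = (t:ℝ)/N) :
    (F.card : ℝ) ≤ (2 + 2*K + 2*(b-a)) * (N:ℝ) ^ ((2:ℝ)/3) := by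
  classical
  have hN0 : (0:ℝ) < N := by exact_mod_cast hN
  have hN1 : (1:ℝ) ≤ N := by exact_mod_cast hN
  set T : ℝ := (N:ℝ) ^ ((2:ℝ)/3) with hTdef
  have hT1 : 1 ≤ T := Real.one_le_rpow hN1 (by norm_num)
  have hT0 : (0:ℝ) < T := lt_of_lt_of_le one_pos hT1
  have hba : (0:ℝ) < b - a := by linarith
  by_cases hm2 : F.card ≤ 1
  · calc (F.card : ℝ) ≤ 1 := by exact_mod_cast hm2
      _ ≤ (2 + 2*K + 2*(b-a)) * T := by nlinarith
  push_neg at hm2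
  -- enumerate F in increasing order
  set e := F.orderIsoOfFin rfl with he
  set s : ℕ → ℤ := fun i => if h : i < F.card then (e ⟨i, h⟩ : ℤ) else 0 with hs
  have hsmem : ∀ i, i < F.card → s i ∈ F := by
    intro i h
    simp only [hs, dif_pos h]
    exact (e ⟨i, h⟩).2
  have hslt : ∀ i, i + 1 < F.card → s i < s (i+1) := by
    intro i h
    have h' : i < F.card := by omega
    simp only [hs, dif_pos h, dif_pos h']
    have : (⟨i, h'⟩ : Fin F.card) < ⟨i+1, h⟩ := by
      simp [Fin.lt_def]
    exact_mod_cast (Subtype.coe_lt_coe.2 (e.strictMono this))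
  set X : ℕ → ℝ := fun i => (s i : ℝ) / N with hX
  have hXmem : ∀ i, i < F.card → X i ∈ Icc a b := by
    intro i h
    obtain ⟨h1, h2, _⟩ := hmem _ (hsmem i h)
    exact ⟨h1, h2⟩
  have hXlt : ∀ i, i + 1 < F.card → X i < X (i+1) := by
    intro i h
    have := hslt i h
    have h' : (s i : ℝ) < s (i+1) := by exact_mod_cast this
    simp only [hX]
    gcongr
  have ht : ∀ i, i < F.card → ∃ t : ℤ, f (X i) = (t:ℝ)/N := fun i h => (hmem _ (hsmem i h)).2.2
  set t : ℕ → ℤ := fun i => if h : i < F.card then Classical.choose (ht i h) else 0 with htd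
  have htspec : ∀ i, (h : i < F.card) → f (X i) = (t i : ℝ)/N := by
    intro i h
    simp only [htd, dif_pos h]
    exact Classical.choose_spec (ht i h)
  set lam : ℕ → ℝ := fun i => (f (X (i+1)) - f (X i)) / (X (i+1) - X i) with hlamd
  set d : ℕ → ℝ := fun i => ((s (i+1) : ℝ) - s i) with hdd
  have hd1 : ∀ i, i + 1 < F.card → (1:ℝ) ≤ d i := by
    intro i h
    have := hslt i h
    have : s i + 1 ≤ s (i+1) := this
    have : ((s i : ℝ)) + 1 ≤ s (i+1) := by exact_mod_cast this
    simp only [hdd]; linarith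
  have hXd : ∀ i, X (i+1) - X i = d i / N := by
    intro i
    simp only [hX, hdd]
    ring
  have hlam_eq : ∀ i, i + 1 < F.card →
      lam i = ((t (i+1) : ℝ) - t i) / d i := by
    intro i h
    have h' : i < F.card := by omega
    have hdne : d i ≠ 0 := by have := hd1 i h; linarith
    have hNne : (N:ℝ) ≠ 0 := ne_of_gt hN0
    simp only [hlamd, htspec (i+1) h, htspec i h', hXd i]
    field_simp
  have hlam_mono : ∀ i, i + 2 < F.card → lam i < lam (i+1) := by
    intro i h
    exact hconv.slope_strict_mono_adjacent (hXmem i (by omega)) (hXmem (i+2) h)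
      (hXlt i (by omega)) (hXlt (i+1) (by omega))
  have hlam_bound : ∀ i, i + 1 < F.card → |lam i| ≤ K := by
    intro i h
    have hx1 := hXmem i (by omega)
    have hx2 := hXmem (i+1) h
    have hlt := hXlt i h
    have hnum := hlip _ hx1 _ hx2
    have hpos : (0:ℝ) < X (i+1) - X i := by linarith
    simp only [hlamd, abs_div]
    rw [div_le_iff₀ (abs_pos.2 (ne_of_gt hpos))]
    calc |f (X (i+1)) - f (X i)| ≤ K * |X (i+1) - X i| := hnum
      _ = K * |X (i+1) - X i| := rfl
  -- apply the core lemma with m' = F.card - 1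
  have hcore := jarnik_core (F.card - 1) d (fun i => lam (i+1) - lam i) T (2*K)
    ((N:ℝ)*(b-a)) hT1
    (by
      intro i hi
      exact hd1 i (by omega))
    (by
      intro i hi
      show 1 / (d i * d (i+1)) ≤ lam (i+1) - lam i
      have h2 : i + 2 < F.card := by omega
      have hmono := hlam_mono i h2
      have e1 := hlam_eq i (by omega)
      have e2 := hlam_eq (i+1) h2
      have hd1i := hd1 i (by omega)
      have hd1i' := hd1 (i+1) h2
      have hdine : d i ≠ 0 := by linarith
      have hdine' : d (i+1) ≠ 0 := by linarith
      set u : ℤ := (t (i+2) - t (i+1)) * (s (i+1) - s i) - (t (i+1) - t i) * (s (i+2) - s (i+1))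
        with hu
      have hgap : lam (i+1) - lam i = (u:ℝ) / (d i * d (i+1)) := by
        rw [e1, e2]
        rw [div_sub_div _ _ hdine' hdine, mul_comm (d (i+1)) (d i)]
        congr 1
        simp only [hu, hdd]
        push_cast
        ring
      have hupos : (0:ℝ) < (u:ℝ) := by
        have hdpos : (0:ℝ) < d i * d (i+1) := by nlinarith
        by_contra hcon
        push_neg at hcon
        have : lam (i+1) - lam i ≤ 0 := by
          rw [hgap]
          exact div_nonpos_of_nonpos_of_nonneg hcon (le_of_lt hdpos)
        linarith
      have hu1 : (1:ℝ) ≤ (u:ℝ) := by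
        have : (0:ℤ) < u := by exact_mod_cast hupos
        exact_mod_cast this
      have hdpos : (0:ℝ) < d i * d (i+1) := by nlinarith
      rw [hgap]
      gcongr
      )
    (by
      show ∑ i ∈ Finset.range (F.card - 1 - 1), (lam (i+1) - lam i) ≤ 2*K
      rw [Finset.sum_range_sub lam (F.card - 1 - 1)]
      have h1 := hlam_bound (F.card - 1 - 1) (by omega)
      have h2 := hlam_bound 0 (by omega)
      have := abs_le.1 h1
      have := abs_le.1 h2
      rw [abs_le] at h1 h2
      linarith [h1.1, h1.2, h2.1, h2.2])
    (by
      have heq : ∑ i ∈ Finset.range (F.card - 1), d i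
          = ((s (F.card - 1) : ℝ)) - ((s 0 : ℝ)) :=
        Finset.sum_range_sub (fun i => ((s i : ℝ))) (F.card - 1)
      rw [heq]
      have hlast := hmem _ (hsmem (F.card - 1) (by omega))
      have hfirst := hmem _ (hsmem 0 (by omega))
      have h1 : (s (F.card - 1) : ℝ) ≤ N * b := by
        have := hlast.2.1
        rw [div_le_iff₀ hN0] at this
        linarith
      have h2 : N * a ≤ (s 0 : ℝ) := by
        have := hfirst.1
        rw [le_div_iff₀ hN0] at this
        linarith
      nlinarith)
  -- now simplify the sqrt
  have hsq : Real.sqrt T = (N:ℝ) ^ ((1:ℝ)/3) := by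
    rw [hTdef, Real.sqrt_eq_rpow, ← Real.rpow_mul (le_of_lt hN0)]
    norm_num
  have hNsplit : (N:ℝ) = T * (N:ℝ) ^ ((1:ℝ)/3) := by
    rw [hTdef, ← Real.rpow_add hN0]
    norm_num
  have hrpow3 : (0:ℝ) < (N:ℝ) ^ ((1:ℝ)/3) := Real.rpow_pos_of_pos hN0 _
  have hdivT : 2 * ((N:ℝ)*(b-a)) / Real.sqrt T = 2*(b-a)*T := by
    rw [hsq, div_eq_iff (ne_of_gt hrpow3)]
    linear_combination (2*(b-a)) * hNsplit
  rw [hdivT] at hcore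
  have hcast : ((F.card - 1 : ℕ) : ℝ) = (F.card : ℝ) - 1 := by
    have : 1 ≤ F.card := by omega
    push_cast [this]
    ring
  rw [hcast] at hcore
  nlinarith

/-- Weak Jarník theorem: the graph of a strictly convex `C²` function on a compact
interval meets the lattice `Λ_N = (1/N)ℤ²` in at most `c·N^{2/3}` points. -/
theorem weak_jarnik (a b : ℝ) (f : ℝ → ℝ)
    (hf : ContDiffOn ℝ 2 f (Icc a b))
    (hconv : StrictConvexOn ℝ (Icc a b) f) :
    ∃ c : ℝ, 0 < c ∧ ∀ N : ℕ, 0 < N →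
      ((fun x => (x, f x)) '' Icc a b ∩
          {p : ℝ × ℝ | ∃ s t : ℤ, p.1 = (s : ℝ) / N ∧ p.2 = (t : ℝ) / N}).Finite ∧
      (((fun x => (x, f x)) '' Icc a b ∩
          {p : ℝ × ℝ | ∃ s t : ℤ, p.1 = (s : ℝ) / N ∧ p.2 = (t : ℝ) / N}).ncard : ℝ) ≤
        c * (N : ℝ) ^ ((2:ℝ)/3) := by
  classical
  rcases le_or_gt b a with hab | hab
  · -- degenerate case: the set has at most one point
    refine ⟨1, one_pos, fun N hN => ?_⟩
    have hsub : (fun x => (x, f x)) '' Icc a b ∩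
        {p : ℝ × ℝ | ∃ s t : ℤ, p.1 = (s : ℝ) / N ∧ p.2 = (t : ℝ) / N} ⊆ {(a, f a)} := by
      rintro p ⟨⟨x, hx, rfl⟩, -⟩
      have : x = a := le_antisymm (le_trans hx.2 hab) hx.1
      simp [this]
    have hfin : ((fun x => (x, f x)) '' Icc a b ∩
        {p : ℝ × ℝ | ∃ s t : ℤ, p.1 = (s : ℝ) / N ∧ p.2 = (t : ℝ) / N}).Finite :=
      (Set.finite_singleton _).subset hsub
    refine ⟨hfin, ?_⟩
    have h1 : ((fun x => (x, f x)) '' Icc a b ∩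
        {p : ℝ × ℝ | ∃ s t : ℤ, p.1 = (s : ℝ) / N ∧ p.2 = (t : ℝ) / N}).ncard ≤ 1 := by
      have := Set.ncard_le_ncard hsub (Set.finite_singleton _)
      simpa using this
    have hN1 : (1:ℝ) ≤ (N:ℝ) ^ ((2:ℝ)/3) :=
      Real.one_le_rpow (by exact_mod_cast hN) (by norm_num)
    calc (((fun x => (x, f x)) '' Icc a b ∩
        {p : ℝ × ℝ | ∃ s t : ℤ, p.1 = (s : ℝ) / N ∧ p.2 = (t : ℝ) / N}).ncard : ℝ)
        ≤ 1 := by exact_mod_cast h1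
      _ ≤ 1 * (N:ℝ) ^ ((2:ℝ)/3) := by linarith
  · -- main case a < b
    -- get a Lipschitz bound for f on [a, b]
    have hder : ContinuousOn (derivWithin f (Icc a b)) (Icc a b) :=
      hf.continuousOn_derivWithin (uniqueDiffOn_Icc hab) one_le_two
    obtain ⟨K, hK⟩ := isCompact_Icc.exists_bound_of_continuousOn hder
    have hK0 : 0 ≤ K := le_trans (norm_nonneg _) (hK a (Set.left_mem_Icc.2 (le_of_lt hab)))
    have hlip : ∀ x ∈ Icc a b, ∀ y ∈ Icc a b, |f y - f x| ≤ K * |y - x| := by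
      intro x hx y hy
      have := (convex_Icc a b).norm_image_sub_le_of_norm_derivWithin_le
        (hf.differentiableOn two_ne_zero) hK hx hy
      simpa [Real.norm_eq_abs] using this
    refine ⟨2 + 2*K + 2*(b-a), by nlinarith, fun N hN => ?_⟩
    have hN0 : (0:ℝ) < N := by exact_mod_cast hN
    set F : Finset ℤ := (Finset.Icc ⌈(N:ℝ)*a⌉ ⌊(N:ℝ)*b⌋).filter
      (fun s => ∃ t : ℤ, f ((s:ℝ)/N) = (t:ℝ)/N) with hF
    have hSeq : (fun x => (x, f x)) '' Icc a b ∩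
        {p : ℝ × ℝ | ∃ s t : ℤ, p.1 = (s : ℝ) / N ∧ p.2 = (t : ℝ) / N}
        = (fun s : ℤ => (((s:ℝ)/N : ℝ), f ((s:ℝ)/N))) '' (↑F : Set ℤ) := by
      ext p
      constructor
      · rintro ⟨⟨x, hx, rfl⟩, ⟨si, ti, h1, h2⟩⟩
        simp only at h1 h2
        refine ⟨si, ?_, ?_⟩
        · simp only [hF, Finset.coe_filter, Set.mem_setOf_eq, Finset.mem_Icc]
          constructor
          · constructor
            · rw [Int.ceil_le]
              have := hx.1
              rw [h1] at this
              rw [le_div_iff₀ hN0] at this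
              linarith
            · rw [Int.le_floor]
              have := hx.2
              rw [h1] at this
              rw [div_le_iff₀ hN0] at this
              linarith
          · exact ⟨ti, by rw [← h1]; exact h2⟩
        · simp only
          rw [← h1]
      · rintro ⟨si, hsi, rfl⟩
        simp only [hF, Finset.coe_filter, Set.mem_setOf_eq, Finset.mem_Icc] at hsi
        obtain ⟨⟨hlo, hhi⟩, ti, hti⟩ := hsi
        have hx : (si:ℝ)/N ∈ Icc a b := by
          constructor
          · rw [le_div_iff₀ hN0]
            have := Int.ceil_le.1 hlo
            linarith
          · rw [div_le_iff₀ hN0]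
            have := Int.le_floor.1 hhi
            linarith
        exact ⟨⟨(si:ℝ)/N, hx, rfl⟩, si, ti, rfl, hti⟩
    rw [hSeq]
    refine ⟨(F.finite_toSet).image _, ?_⟩
    have hncard : ((fun s : ℤ => (((s:ℝ)/N : ℝ), f ((s:ℝ)/N))) '' (↑F : Set ℤ)).ncard
        ≤ F.card := by
      calc ((fun s : ℤ => (((s:ℝ)/N : ℝ), f ((s:ℝ)/N))) '' (↑F : Set ℤ)).ncard
          ≤ (↑F : Set ℤ).ncard := Set.ncard_image_le F.finite_toSet
        _ = F.card := Set.ncard_coe_finset F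
    have hmain : (F.card : ℝ) ≤ (2 + 2*K + 2*(b-a)) * (N:ℝ) ^ ((2:ℝ)/3) := by
      apply jarnik_card_bound a b K f hab hK0 hconv hlip N hN
      intro si hsi
      simp only [hF, Finset.mem_filter, Finset.mem_Icc] at hsi
      obtain ⟨⟨hlo, hhi⟩, hti⟩ := hsi
      refine ⟨?_, ?_, hti⟩
      · rw [le_div_iff₀ hN0]
        have := Int.ceil_le.1 hlo
        linarith
      · rw [div_le_iff₀ hN0]
        have := Int.le_floor.1 hhi
        linarith
    calc (((fun s : ℤ => (((s:ℝ)/N : ℝ), f ((s:ℝ)/N))) '' (↑F : Set ℤ)).ncard : ℝ)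
        ≤ (F.card : ℝ) := by exact_mod_cast hncard
      _ ≤ (2 + 2*K + 2*(b-a)) * (N:ℝ) ^ ((2:ℝ)/3) := hmain
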